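/- Let p(N) denote the probability that a uniformly random permutation of {0,…,N−1} has more than 3.6·log N cycles (natural logarithm, fixed points counting as cycles). Then p(N) = o(1/N) as N → ∞. (Consequently, the CCL process truncated after l ≥ 3.6·log N steps cannot be distinguished from the untruncated process with advantage greater than o(1/N).) -/

import Mathlib

open Asymptotics Filter

/-- The number of cycles of a permutation of `Fin N`, counting fixed points as cycles of
length 1 (one cycle per minimal element of a cycle). -/
noncomputable def cycleCount {N : ℕ} (σ : Equiv.Perm (Fin N)) : ℕ :=
  Nat.card {x : Fin N // ∀ m : ℕ, x ≤ (σ ^ m) x}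

section Aux

open Equiv Finset

variable {N : ℕ}

/-- A finset is invariant under a permutation. -/
def PInv (σ : Perm (Fin N)) (A : Finset (Fin N)) : Prop := ∀ x, x ∈ A ↔ σ x ∈ A

instance (σ : Perm (Fin N)) (A : Finset (Fin N)) : Decidable (PInv σ A) :=
  inferInstanceAs (Decidable (∀ x, x ∈ A ↔ σ x ∈ A))

/-- Two minimal elements on the same cycle are equal. -/
lemma min_eq {σ : Perm (Fin N)} {s t : Fin N} (hs : ∀ m : ℕ, s ≤ (σ ^ m) s)
    (ht : ∀ m : ℕ, t ≤ (σ ^ m) t) (h : σ.SameCycle s t) : s = t := by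
  obtain ⟨i, _, hi⟩ := h.exists_pow_eq'
  obtain ⟨j, _, hj⟩ := h.symm.exists_pow_eq'
  exact le_antisymm (hi ▸ hs i) (hj ▸ ht j)

/-- `2 ^ (number of cycles of σ)` is at most the number of `σ`-invariant subsets. -/
lemma two_pow_cycleCount_le (σ : Perm (Fin N)) :
    2 ^ cycleCount σ ≤ ((univ : Finset (Finset (Fin N))).filter (fun A => PInv σ A)).card := by
  classical
  have hcc : cycleCount σ =
      ((univ : Finset (Fin N)).filter (fun x => ∀ m : ℕ, x ≤ (σ ^ m) x)).card := by
    rw [cycleCount, Nat.card_eq_fintype_card, Fintype.card_subtype]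
  set M := (univ : Finset (Fin N)).filter (fun x => ∀ m : ℕ, x ≤ (σ ^ m) x) with hM
  rw [hcc, ← Finset.card_powerset]
  apply Finset.card_le_card_of_injOn
    (fun T => (univ : Finset (Fin N)).filter (fun x => ∃ t ∈ T, σ.SameCycle t x))
  · intro T _
    simp only [Finset.mem_coe, mem_filter, mem_univ, true_and]
    intro x
    simp only [mem_filter, mem_univ, true_and]
    constructor
    · rintro ⟨t, htT, hcyc⟩
      exact ⟨t, htT, hcyc.trans (Perm.SameCycle.refl σ x).apply_right⟩
    · rintro ⟨t, htT, hcyc⟩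
      exact ⟨t, htT, by simpa using hcyc⟩
  · intro T₁ h₁ T₂ h₂ heq
    simp only [Finset.mem_coe, Finset.mem_powerset] at h₁ h₂
    have key : ∀ T₁' T₂' : Finset (Fin N), T₁' ⊆ M → T₂' ⊆ M →
        (univ.filter (fun x => ∃ t ∈ T₁', σ.SameCycle t x)) =
        (univ.filter (fun x => ∃ t ∈ T₂', σ.SameCycle t x)) → T₁' ⊆ T₂' := by
      intro T₁' T₂' hT₁ hT₂ he t ht
      have : t ∈ univ.filter (fun x => ∃ t ∈ T₁', σ.SameCycle t x) := by
        simp only [mem_filter, mem_univ, true_and]; exact ⟨t, ht, Perm.SameCycle.refl σ t⟩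
      rw [he] at this
      simp only [mem_filter, mem_univ, true_and] at this
      obtain ⟨s, hs, hcyc⟩ := this
      have hsm := (mem_filter.1 (hT₂ hs)).2
      have htm := (mem_filter.1 (hT₁ ht)).2
      rwa [min_eq hsm htm hcyc] at hs
    exact Finset.Subset.antisymm (key T₁ T₂ h₁ h₂ heq) (key T₂ T₁ h₂ h₁ heq.symm)

/-- Glue a permutation of `A` with one of its complement. -/
def pglue (A : Finset (Fin N)) :
    Perm {x : Fin N // x ∈ A} × Perm {x : Fin N // ¬ x ∈ A} → {σ : Perm (Fin N) // PInv σ A} :=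
  fun p =>
    ⟨p.1.subtypeCongr p.2, by
      intro x
      by_cases h : x ∈ A
      · simp only [Perm.subtypeCongr.left_apply _ _ h]
        exact ⟨fun _ => (p.1 ⟨x, h⟩).2, fun _ => h⟩
      · simp only [Perm.subtypeCongr.right_apply _ _ h]
        exact ⟨fun hx => absurd hx h, fun hx => absurd hx (p.2 ⟨x, h⟩).2⟩⟩

lemma pglue_bij (A : Finset (Fin N)) : Function.Bijective (pglue A) := by
  constructor
  · rintro ⟨π, τ⟩ ⟨π', τ'⟩ h
    have h' : π.subtypeCongr τ = π'.subtypeCongr τ' := congrArg Subtype.val h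
    refine Prod.ext ?_ ?_
    · apply Equiv.ext; intro a
      have hx := Equiv.ext_iff.1 h' (a : Fin N)
      rw [Perm.subtypeCongr.left_apply _ _ a.2, Perm.subtypeCongr.left_apply _ _ a.2] at hx
      exact Subtype.ext hx
    · apply Equiv.ext; intro a
      have hx := Equiv.ext_iff.1 h' (a : Fin N)
      rw [Perm.subtypeCongr.right_apply _ _ a.2, Perm.subtypeCongr.right_apply _ _ a.2] at hx
      exact Subtype.ext hx
  · rintro ⟨σ, hσ⟩
    refine ⟨⟨σ.subtypePerm (fun x => (hσ x).symm), σ.subtypePerm (fun x => not_iff_not.2 (hσ x).symm)⟩, ?_⟩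
    apply Subtype.ext
    apply Equiv.ext
    intro x
    by_cases h : x ∈ A
    · simp [pglue, Perm.subtypeCongr.left_apply _ _ h, Perm.subtypePerm_apply]
    · simp [pglue, Perm.subtypeCongr.right_apply _ _ h, Perm.subtypePerm_apply]

/-- The number of permutations preserving a given set `A`. -/
lemma card_pinv (A : Finset (Fin N)) :
    ((univ : Finset (Perm (Fin N))).filter (fun σ => PInv σ A)).card
      = Nat.factorial A.card * Nat.factorial (N - A.card) := by
  classical
  rw [Fintype.card_subtype (p := fun σ : Perm (Fin N) => PInv σ A) |>.symm,
    ← Fintype.card_of_bijective (pglue_bij A), Fintype.card_prod, Fintype.card_perm,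
    Fintype.card_perm, Fintype.card_coe, Fintype.card_subtype_compl, Fintype.card_coe,
    Fintype.card_fin]

lemma sum_factorials :
    ∑ A : Finset (Fin N), Nat.factorial A.card * Nat.factorial (N - A.card)
      = Nat.factorial (N + 1) := by
  classical
  rw [← Finset.powerset_univ, Finset.sum_powerset]
  have huniv : (univ : Finset (Fin N)).card = N := by simp
  rw [huniv]
  have hinner : ∀ j ∈ Finset.range (N + 1),
      ∑ A ∈ Finset.powersetCard j (univ : Finset (Fin N)),
        Nat.factorial A.card * Nat.factorial (N - A.card) = Nat.factorial N := by
    intro j hj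
    have hjN : j ≤ N := Nat.lt_succ_iff.1 (Finset.mem_range.1 hj)
    rw [Finset.sum_congr rfl (fun A hA => by
      rw [(Finset.mem_powersetCard.1 hA).2]), Finset.sum_const, Finset.card_powersetCard,
      huniv, smul_eq_mul, ← mul_assoc, Nat.choose_mul_factorial_mul_factorial hjN]
  rw [Finset.sum_congr rfl hinner, Finset.sum_const, Finset.card_range, smul_eq_mul,
    Nat.factorial_succ]

/-- Key identity bound: `∑_σ 2^{#cycles(σ)} ≤ (N+1)!`. -/
lemma sum_two_pow_le :
    ∑ σ : Perm (Fin N), 2 ^ cycleCount σ ≤ Nat.factorial (N + 1) := by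
  classical
  have hsum : ∑ σ : Perm (Fin N),
      ((univ : Finset (Finset (Fin N))).filter (fun A => PInv σ A)).card
        = Nat.factorial (N + 1) := by
    calc ∑ σ : Perm (Fin N), ((univ : Finset (Finset (Fin N))).filter (fun A => PInv σ A)).card
        = ∑ σ : Perm (Fin N), ∑ A : Finset (Fin N), if PInv σ A then 1 else 0 :=
          Finset.sum_congr rfl fun σ _ => Finset.card_filter _ _
      _ = ∑ A : Finset (Fin N), ∑ σ : Perm (Fin N), if PInv σ A then 1 else 0 :=
          Finset.sum_comm
      _ = ∑ A : Finset (Fin N),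
            ((univ : Finset (Perm (Fin N))).filter (fun σ => PInv σ A)).card :=
          Finset.sum_congr rfl fun A _ => (Finset.card_filter _ _).symm
      _ = _ := by rw [Finset.sum_congr rfl (fun A _ => card_pinv A), sum_factorials]
  exact le_trans (Finset.sum_le_sum (fun σ _ => two_pow_cycleCount_le σ)) hsum.le

/-- Markov bound on the number of permutations with many cycles. -/
lemma markov_bound (N : ℕ) :
    (Nat.card {σ : Equiv.Perm (Fin N) //
        (3.6 : ℝ) * Real.log N < (cycleCount σ : ℝ)} : ℝ)
      * (2 : ℝ) ^ ((3.6 : ℝ) * Real.log N) ≤ (Nat.factorial (N + 1) : ℝ) := by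
  classical
  set t : ℝ := (3.6 : ℝ) * Real.log N with ht
  set F := (univ : Finset (Perm (Fin N))).filter (fun σ => t < (cycleCount σ : ℝ)) with hF
  have hcard : (Nat.card {σ : Equiv.Perm (Fin N) // t < (cycleCount σ : ℝ)}) = F.card := by
    rw [Nat.card_eq_fintype_card, Fintype.card_subtype]
  rw [hcard]
  calc (F.card : ℝ) * (2 : ℝ) ^ t = ∑ _σ ∈ F, (2 : ℝ) ^ t := by
        rw [Finset.sum_const, nsmul_eq_mul]
    _ ≤ ∑ σ ∈ F, (2 : ℝ) ^ (cycleCount σ : ℕ) := by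
        apply Finset.sum_le_sum
        intro σ hσ
        rw [← Real.rpow_natCast 2 (cycleCount σ)]
        exact Real.rpow_le_rpow_of_exponent_le one_le_two
          (le_of_lt (by simpa [hF] using (Finset.mem_filter.1 hσ).2))
    _ ≤ ∑ σ : Perm (Fin N), (2 : ℝ) ^ (cycleCount σ : ℕ) := by
        apply Finset.sum_le_sum_of_subset_of_nonneg (Finset.subset_univ F)
        intro σ _ _; positivity
    _ = ((∑ σ : Perm (Fin N), 2 ^ cycleCount σ : ℕ) : ℝ) := by push_cast; ring
    _ ≤ (Nat.factorial (N + 1) : ℝ) := Nat.cast_le.2 sum_two_pow_le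

end Aux

/-- The probability that a uniformly random permutation of `{0,…,N−1}` has more than
`3.6·log N` cycles is `o(1/N)`. -/
theorem stmt_13 :
    (fun N : ℕ =>
        (Nat.card {σ : Equiv.Perm (Fin N) //
            (3.6 : ℝ) * Real.log N < (cycleCount σ : ℝ)} : ℝ)
          / (Nat.factorial N : ℝ))
      =o[atTop] (fun N : ℕ => 1 / (N : ℝ)) := by
  classical
  set cnt : ℕ → ℝ := fun N => (Nat.card {σ : Equiv.Perm (Fin N) //
      (3.6 : ℝ) * Real.log N < (cycleCount σ : ℝ)} : ℝ) with hcnt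
  set f : ℕ → ℝ := fun N => cnt N / (Nat.factorial N : ℝ) with hf
  set c : ℝ := 3.6 * Real.log 2 with hc
  have hc2 : 2 < c := by
    have := Real.log_two_gt_d9
    nlinarith
  have hcnt0 : ∀ N, 0 ≤ cnt N := fun N => Nat.cast_nonneg _
  have key : ∀ N : ℕ, 1 ≤ N → f N * N ≤ 2 * (N : ℝ) ^ ((2 : ℝ) - c) := by
    intro N hN
    have hNpos : (0 : ℝ) < N := by exact_mod_cast hN
    have h2t : (2 : ℝ) ^ ((3.6 : ℝ) * Real.log N) = (N : ℝ) ^ c := by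
      rw [Real.rpow_def_of_pos two_pos, Real.rpow_def_of_pos hNpos, hc]
      congr 1; ring
    have hNc : (0 : ℝ) < (N : ℝ) ^ c := Real.rpow_pos_of_pos hNpos c
    have hfac : (0 : ℝ) < (Nat.factorial N : ℝ) := by
      exact_mod_cast Nat.factorial_pos N
    have step1 : f N * N ≤ ((N : ℝ) + 1) * N / (N : ℝ) ^ c := by
      rw [hf]
      have : cnt N / (Nat.factorial N : ℝ) ≤ ((N : ℝ) + 1) / (N : ℝ) ^ c := by
        rw [div_le_div_iff₀ hfac hNc]
        calc cnt N * (N : ℝ) ^ c ≤ (Nat.factorial (N + 1) : ℝ) := by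
              rw [← h2t]; exact markov_bound N
          _ = ((N : ℝ) + 1) * (Nat.factorial N : ℝ) := by
              rw [Nat.factorial_succ]; push_cast; ring
      calc cnt N / (Nat.factorial N : ℝ) * N ≤ ((N : ℝ) + 1) / (N : ℝ) ^ c * N := by
            apply mul_le_mul_of_nonneg_right this (Nat.cast_nonneg N)
        _ = ((N : ℝ) + 1) * N / (N : ℝ) ^ c := by ring
    refine step1.trans ?_
    have h1N : (1 : ℝ) ≤ N := by exact_mod_cast hN
    have hle : ((N : ℝ) + 1) * N ≤ 2 * (N : ℝ) ^ (2 : ℝ) := by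
      rw [Real.rpow_two]
      nlinarith [h1N]
    calc ((N : ℝ) + 1) * N / (N : ℝ) ^ c ≤ 2 * (N : ℝ) ^ (2 : ℝ) / (N : ℝ) ^ c := by
          gcongr
      _ = 2 * (N : ℝ) ^ ((2 : ℝ) - c) := by
          rw [Real.rpow_sub hNpos]; ring
  have htend : Tendsto (fun N : ℕ => f N * N) atTop (nhds 0) := by
    apply squeeze_zero' (Eventually.of_forall fun N => by positivity)
      ((eventually_ge_atTop 1).mono fun N hN => key N hN)
    have h1 : Tendsto (fun x : ℝ => 2 * x ^ (-(c - 2))) atTop (nhds (2 * 0)) :=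
      (tendsto_rpow_neg_atTop (by linarith)).const_mul 2
    rw [mul_zero, neg_sub] at h1
    exact h1.comp tendsto_natCast_atTop_atTop (α := ℕ)
  rw [isLittleO_iff_tendsto]
  · apply htend.congr'
    filter_upwards [eventually_ge_atTop 1] with N hN
    have hNne : (N : ℝ) ≠ 0 := by positivity
    field_simp
  · intro N hN
    have : (N : ℝ) = 0 := by
      by_contra h
      exact h (by simpa [one_div, inv_eq_zero] using hN)
    have hN0 : N = 0 := by exact_mod_cast this
    subst hN0
    have hempty : IsEmpty {σ : Equiv.Perm (Fin 0) //
        (3.6 : ℝ) * Real.log (0 : ℝ) < (cycleCount σ : ℝ)} := by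
      constructor
      rintro ⟨σ, hσ⟩
      have hccz : cycleCount σ = 0 := by
        have he : IsEmpty {x : Fin 0 // ∀ m : ℕ, x ≤ (σ ^ m) x} := ⟨fun x => Fin.elim0 x.1⟩
        rw [cycleCount]
        exact @Nat.card_of_isEmpty _ he
      rw [hccz] at hσ
      simp at hσ
    have hzero : Nat.card {σ : Equiv.Perm (Fin 0) //
        (3.6 : ℝ) * Real.log (0 : ℝ) < (cycleCount σ : ℝ)} = 0 :=
      @Nat.card_of_isEmpty _ hempty
    simp only [hf, hcnt, hzero, Nat.cast_zero, zero_div]
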